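/- Let Q be as in the context and let a < b be real numbers with φ(a,b) ≥ 0. Define p(x) = (1/(2π)) · ∫_a^b D(x,t) · √((t−a)/(b−t)) dt + (1/2)·Q'(x). Then p(x) ≥ 0 for every real x ≥ a. -/

import Mathlib

open MeasureTheory intervalIntegral

/-- `φ(a,b) = ∫₀¹ Q'((1−t)b + t·a)/√(t(1−t)) dt`. -/
noncomputable def phi (Q : Polynomial ℝ) (a b : ℝ) : ℝ :=
  ∫ t in (0:ℝ)..1, Q.derivative.eval ((1 - t) * b + t * a) / Real.sqrt (t * (1 - t))

/-- The divided difference `D(x,t) = (Q'(x) − Q'(t))/(x − t)` for `t ≠ x`, `D(x,x) = Q''(x)`. -/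
noncomputable def divDiff (Q : Polynomial ℝ) (x t : ℝ) : ℝ :=
  if x = t then Q.derivative.derivative.eval x
  else (Q.derivative.eval x - Q.derivative.eval t) / (x - t)

/-- `p(x) = (1/(2π)) ∫_a^b D(x,t)·√((t−a)/(b−t)) dt + (1/2)·Q'(x)`. -/
noncomputable def pFun (Q : Polynomial ℝ) (a b x : ℝ) : ℝ :=
  (1 / (2 * Real.pi)) * (∫ t in a..b, divDiff Q x t * Real.sqrt ((t - a) / (b - t)))
    + (1 / 2) * Q.derivative.eval x

section Auxiliary

open Polynomial Finset Set

/-- A polynomial expression for the divided difference. -/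
noncomputable def divS (Q : Polynomial ℝ) (x t : ℝ) : ℝ :=
  ∑ k ∈ Finset.range (Q.derivative.natDegree + 1),
    Q.derivative.coeff k * ∑ i ∈ Finset.range k, x ^ i * t ^ (k - 1 - i)

lemma divS_mul (Q : Polynomial ℝ) (x t : ℝ) :
    divS Q x t * (x - t) = Q.derivative.eval x - Q.derivative.eval t := by
  rw [divS, Finset.sum_mul, eval_eq_sum_range, eval_eq_sum_range, ← Finset.sum_sub_distrib]
  refine Finset.sum_congr rfl fun k _ => ?_
  rw [mul_assoc, geom_sum₂_mul, mul_sub]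

lemma divS_self (Q : Polynomial ℝ) (x : ℝ) :
    divS Q x x = Q.derivative.derivative.eval x := by
  rw [derivative_eval, Polynomial.sum_over_range (Q.derivative) (by simp), divS]
  refine Finset.sum_congr rfl fun k _ => ?_
  have h1 : ∀ i ∈ Finset.range k, x ^ i * x ^ (k - 1 - i) = x ^ (k-1) := by
    intro i hi
    rw [← pow_add]
    congr 1
    have := Finset.mem_range.mp hi
    omega
  rw [Finset.sum_congr rfl h1, Finset.sum_const, Finset.card_range, nsmul_eq_mul]
  ring

lemma divDiff_eq_divS (Q : Polynomial ℝ) (x t : ℝ) : divDiff Q x t = divS Q x t := by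
  rw [divDiff]
  split_ifs with h
  · rw [← h, divS_self]
  · rw [← divS_mul, mul_div_assoc, div_self (sub_ne_zero.mpr h), mul_one]

lemma continuous_divS (Q : Polynomial ℝ) (x : ℝ) : Continuous (fun t => divS Q x t) := by
  unfold divS
  exact continuous_finset_sum _ fun k _ => Continuous.mul continuous_const
    (continuous_finset_sum _ fun i _ => Continuous.mul continuous_const (continuous_pow _))

lemma divDiff_mul (Q : Polynomial ℝ) (x t : ℝ) :
    divDiff Q x t * (t - x) = Q.derivative.eval t - Q.derivative.eval x := by
  rw [divDiff_eq_divS, show t - x = -(x - t) by ring, mul_neg, divS_mul]; ring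

lemma divDiff_nonneg (Q : Polynomial ℝ)
    (hconv : ∀ x : ℝ, 0 ≤ Q.derivative.derivative.eval x) (x t : ℝ) :
    0 ≤ divDiff Q x t := by
  have hmono : Monotone (fun y : ℝ => Q.derivative.eval y) := by
    have : ∀ y : ℝ, 0 ≤ deriv (fun y : ℝ => Q.derivative.eval y) y := by
      intro y; rw [Polynomial.deriv]; exact hconv y
    exact monotone_of_deriv_nonneg Q.derivative.differentiable this
  rw [divDiff]
  split_ifs with h
  · exact hconv x
  · rcases lt_or_gt_of_ne h with hlt | hlt
    · exact div_nonneg_iff.mpr (Or.inr ⟨by simpa using hmono hlt.le, by linarith⟩)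
    · exact div_nonneg (by simpa using sub_nonneg.mpr (hmono hlt.le)) (by linarith)

/-- integrability of `g(t)/√((t-a)(b-t))` on `[a,b]` for continuous `g`. -/
lemma intA {a b : ℝ} (hab : a < b) (g : ℝ → ℝ) (hg : Continuous g) :
    IntervalIntegrable (fun t => g t / Real.sqrt ((t - a) * (b - t))) volume a b := by
  set f : ℝ → ℝ := fun t => g t / Real.sqrt ((t - a) * (b - t)) with hf
  have hmeas : ∀ u v : ℝ, AEStronglyMeasurable f (volume.restrict (Set.uIoc u v)) := by
    intro u v
    refine ((hg.measurable.div ((measurable_id.sub_const a).mul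
      ((measurable_const.sub measurable_id))).sqrt)).aestronglyMeasurable
  obtain ⟨M, hM⟩ : ∃ M : ℝ, ∀ t ∈ Set.Icc a b, |g t| ≤ M := by
    obtain ⟨M, hM⟩ := (isCompact_Icc (a := a) (b := b)).exists_bound_of_continuousOn
      (hg.continuousOn (s := Set.Icc a b))
    exact ⟨M, fun t ht => by simpa using hM t ht⟩
  set c := (a + b) / 2 with hc
  have hac : a < c := by rw [hc]; linarith
  have hcb : c < b := by rw [hc]; linarith
  have half1 : IntervalIntegrable f volume a c := by
    have hbound : IntervalIntegrable
        (fun t => M / Real.sqrt (b - c) * (t - a) ^ (-(1/2) : ℝ)) volume a c := by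
      have := (intervalIntegrable_rpow' (a := 0) (b := c - a)
        (r := (-(1/2) : ℝ)) (by norm_num)).comp_sub_right a
      simpa using this.const_mul (M / Real.sqrt (b - c))
    refine hbound.mono_fun (hmeas a c) ?_
    rw [Set.uIoc_of_le hac.le]
    refine MeasureTheory.ae_restrict_of_forall_mem measurableSet_Ioc fun t ht => ?_
    have h1 : 0 < t - a := by linarith [ht.1]
    have h2 : 0 < b - t := by linarith [ht.2, hcb]
    have h3 : (0:ℝ) < b - c := by linarith
    have hMt : |g t| ≤ M := hM t ⟨by linarith, by linarith⟩
    have hM0 : 0 ≤ M := le_trans (abs_nonneg _) hMt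
    simp only [hf, Real.norm_eq_abs, abs_div, abs_of_nonneg (Real.sqrt_nonneg ((t-a)*(b-t)))]
    rw [Real.sqrt_mul h1.le, abs_of_nonneg
      (by positivity : (0:ℝ) ≤ M / Real.sqrt (b - c) * (t - a) ^ (-(1/2) : ℝ))]
    rw [Real.rpow_neg h1.le, ← Real.sqrt_eq_rpow]
    have hsq : Real.sqrt (b - c) ≤ Real.sqrt (b - t) := Real.sqrt_le_sqrt (by linarith [ht.2])
    have key : |g t| / (Real.sqrt (t - a) * Real.sqrt (b - t))
        = (|g t| / Real.sqrt (b - t)) * (Real.sqrt (t - a))⁻¹ := by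
      have e1 : Real.sqrt (t - a) ≠ 0 := by positivity
      have e2 : Real.sqrt (b - t) ≠ 0 := by positivity
      field_simp
      try (left; ring)
    rw [key]
    exact mul_le_mul_of_nonneg_right
      (div_le_div₀ hM0 hMt (Real.sqrt_pos.mpr h3) hsq)
      (inv_nonneg.mpr (Real.sqrt_nonneg _))
  have half2 : IntervalIntegrable f volume c b := by
    have hbound : IntervalIntegrable
        (fun t => M / Real.sqrt (c - a) * (b - t) ^ (-(1/2) : ℝ)) volume c b := by
      have := (intervalIntegrable_rpow' (a := 0) (b := b - c)
        (r := (-(1/2) : ℝ)) (by norm_num)).comp_sub_left b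
      simpa using (this.symm.const_mul (M / Real.sqrt (c - a)))
    refine hbound.mono_fun (hmeas c b) ?_
    rw [Set.uIoc_of_le hcb.le]
    refine MeasureTheory.ae_restrict_of_forall_mem measurableSet_Ioc fun t ht => ?_
    rcases eq_or_lt_of_le ht.2 with rfl | htb
    · simp [hf, Real.norm_eq_abs]
    have h1 : 0 < t - a := by linarith [ht.1, hac]
    have h2 : 0 < b - t := by linarith
    have h3 : (0:ℝ) < c - a := by linarith
    have hMt : |g t| ≤ M := hM t ⟨by linarith, by linarith⟩
    have hM0 : 0 ≤ M := le_trans (abs_nonneg _) hMt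
    simp only [hf, Real.norm_eq_abs, abs_div, abs_of_nonneg (Real.sqrt_nonneg ((t-a)*(b-t)))]
    rw [Real.sqrt_mul h1.le, abs_of_nonneg
      (by positivity : (0:ℝ) ≤ M / Real.sqrt (c - a) * (b - t) ^ (-(1/2) : ℝ))]
    rw [Real.rpow_neg h2.le, ← Real.sqrt_eq_rpow]
    have hsq : Real.sqrt (c - a) ≤ Real.sqrt (t - a) := Real.sqrt_le_sqrt (by linarith [ht.1])
    have key : |g t| / (Real.sqrt (t - a) * Real.sqrt (b - t))
        = (|g t| / Real.sqrt (t - a)) * (Real.sqrt (b - t))⁻¹ := by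
      have e1 : Real.sqrt (t - a) ≠ 0 := by positivity
      have e2 : Real.sqrt (b - t) ≠ 0 := by positivity
      field_simp
      try (left; ring)
    rw [key]
    exact mul_le_mul_of_nonneg_right
      (div_le_div₀ hM0 hMt (Real.sqrt_pos.mpr h3) hsq)
      (inv_nonneg.mpr (Real.sqrt_nonneg _))
  exact half1.trans half2

/-- `∫_a^b dt/√((t-a)(b-t)) = π`. -/
lemma I0 {a b : ℝ} (hab : a < b)
    (hint : IntervalIntegrable (fun t => 1 / Real.sqrt ((t - a) * (b - t))) volume a b) :
    ∫ t in a..b, 1 / Real.sqrt ((t - a) * (b - t)) = Real.pi := by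
  have hba : (0:ℝ) < b - a := by linarith
  set F : ℝ → ℝ := fun t => Real.arcsin ((2*t - a - b)/(b - a)) with hF
  have hcont : ContinuousOn F (Set.Icc a b) :=
    (Real.continuous_arcsin.comp (by continuity)).continuousOn
  have hderiv : ∀ t ∈ Set.Ioo a b,
      HasDerivWithinAt F (1 / Real.sqrt ((t - a) * (b - t))) (Set.Ioi t) t := by
    intro t ht
    set u : ℝ := (2*t - a - b)/(b - a) with hu
    have hu1 : u ≠ -1 := by
      intro h
      rw [hu, div_eq_iff (show b - a ≠ 0 by linarith)] at h
      linarith [ht.1]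
    have hu2 : u ≠ 1 := by
      intro h
      rw [hu, div_eq_iff (show b - a ≠ 0 by linarith)] at h
      linarith [ht.2]
    have hd1 : HasDerivAt (fun s : ℝ => (2*s - a - b)/(b - a)) (2/(b - a)) t := by
      have : HasDerivAt (fun s : ℝ => 2*s - a - b) 2 t := by
        simpa using (((hasDerivAt_id t).const_mul 2).sub_const a).sub_const b
      simpa using this.div_const (b - a)
    have harc := (Real.hasDerivAt_arcsin hu1 hu2).comp t hd1
    have hval : 1 / Real.sqrt (1 - u^2) * (2/(b - a)) = 1 / Real.sqrt ((t - a) * (b - t)) := by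
      have h1 : 1 - u^2 = (2/(b - a))^2 * ((t - a) * (b - t)) := by
        rw [hu]; field_simp; ring
      rw [h1, Real.sqrt_mul (sq_nonneg _), Real.sqrt_sq (by positivity : (0:ℝ) ≤ 2/(b-a))]
      have hs : (0:ℝ) < Real.sqrt ((t - a) * (b - t)) := by
        apply Real.sqrt_pos.mpr
        have := ht.1; have := ht.2
        apply mul_pos <;> linarith
      field_simp
    rw [← hval]
    exact (harc.congr_deriv rfl).hasDerivWithinAt
  have := intervalIntegral.integral_eq_sub_of_hasDeriv_right_of_le hab.le hcont hderiv hint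
  rw [this, hF]
  have e1 : (2*b - a - b)/(b - a) = 1 := by field_simp; ring
  have e2 : (2*a - a - b)/(b - a) = -1 := by field_simp; ring
  simp only [e1, e2, Real.arcsin_one, Real.arcsin_neg_one]
  ring

/-- `φ(a,b)` rewritten as an integral over `[a,b]`. -/
lemma phi_eq (Q : Polynomial ℝ) {a b : ℝ} (hab : a < b) :
    phi Q a b = ∫ t in a..b, Q.derivative.eval t / Real.sqrt ((t - a) * (b - t)) := by
  have hba : (0:ℝ) < b - a := by linarith
  set f : ℝ → ℝ := fun s => Q.derivative.eval s / Real.sqrt ((s - a) * (b - s)) with hf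
  have key : ∀ t : ℝ, Q.derivative.eval ((1 - t) * b + t * a) / Real.sqrt (t * (1 - t))
      = (b - a) * f ((a - b) * t + b) := by
    intro t
    have h1 : (1 - t) * b + t * a = (a - b) * t + b := by ring
    have h2 : ((a - b) * t + b - a) * (b - ((a - b) * t + b)) = (b - a)^2 * (t * (1 - t)) := by
      ring
    rw [h1, hf]
    simp only
    rw [h2, Real.sqrt_mul (sq_nonneg _), Real.sqrt_sq hba.le]
    rcases eq_or_ne (Real.sqrt (t * (1 - t))) 0 with h | h
    · simp [h]
    · field_simp
  rw [phi, intervalIntegral.integral_congr (fun t _ => key t),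
    intervalIntegral.integral_const_mul,
    intervalIntegral.integral_comp_mul_add f (show a - b ≠ 0 by linarith) b]
  have e0 : (a - b) * 0 + b = b := by ring
  have e1 : (a - b) * 1 + b = a := by ring
  rw [e0, e1, intervalIntegral.integral_symm, smul_eq_mul]
  field_simp
  rw [← neg_div, div_eq_iff (show a - b ≠ (0:ℝ) by linarith)]
  ring

end Auxiliary

/-- If `φ(a,b) ≥ 0`, then `p(x) ≥ 0` for every `x ≥ a`. -/
theorem pFun_nonneg (Q : Polynomial ℝ) (m : ℕ) (hm : 1 ≤ m)
    (hdeg : Q.natDegree = 2 * m) (hlead : 0 < Q.leadingCoeff)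
    (hconv : ∀ x : ℝ, 0 ≤ Q.derivative.derivative.eval x)
    (a b : ℝ) (hab : a < b) (hphi : 0 ≤ phi Q a b) :
    ∀ x : ℝ, a ≤ x → 0 ≤ pFun Q a b x := by
  intro x hx
  have hπ : (0:ℝ) < Real.pi := Real.pi_pos
  have hQc : Continuous fun t : ℝ => Q.derivative.eval t := Q.derivative.continuous
  have i1 := intA hab _ hQc
  have i2 := (intA hab (fun _ => (1:ℝ)) continuous_const).const_mul (Q.derivative.eval x)
  have i3 := (intA hab _ (continuous_divS Q x)).const_mul (x - a)
  set w : ℝ → ℝ := fun t => Real.sqrt ((t - a) * (b - t)) with hw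
  -- pointwise identity for the integrand
  have key : Set.EqOn (fun t => divDiff Q x t * Real.sqrt ((t - a) / (b - t)))
      (fun t => Q.derivative.eval t / w t - Q.derivative.eval x * (1 / w t)
        + (x - a) * (divS Q x t / w t)) (Set.uIcc a b) := by
    intro t ht
    rw [Set.uIcc_of_le hab.le] at ht
    obtain ⟨hta, htb⟩ := ht
    simp only [hw]
    rcases eq_or_lt_of_le hta with heq | h1
    · subst heq
      simp
    rcases eq_or_lt_of_le htb with heq | h2
    · subst heq
      simp
    have hs1 : (0:ℝ) < Real.sqrt (t - a) := Real.sqrt_pos.mpr (by linarith)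
    have hs2 : (0:ℝ) < Real.sqrt (b - t) := Real.sqrt_pos.mpr (by linarith)
    have hss1 : Real.sqrt (t - a) * Real.sqrt (t - a) = t - a :=
      Real.mul_self_sqrt (by linarith)
    have hD : divDiff Q x t * (t - a)
        = Q.derivative.eval t - Q.derivative.eval x + (x - a) * divDiff Q x t := by
      have h := divDiff_mul Q x t
      calc divDiff Q x t * (t - a)
          = divDiff Q x t * (t - x) + (x - a) * divDiff Q x t := by ring
        _ = Q.derivative.eval t - Q.derivative.eval x + (x - a) * divDiff Q x t := by
            rw [h]
    rw [← divDiff_eq_divS, Real.sqrt_div (by linarith : (0:ℝ) ≤ t - a),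
      Real.sqrt_mul (by linarith : (0:ℝ) ≤ t - a)]
    have expand : divDiff Q x t * (Real.sqrt (t - a) / Real.sqrt (b - t))
        = (divDiff Q x t * (t - a)) / (Real.sqrt (t - a) * Real.sqrt (b - t)) := by
      rw [← hss1, Real.sqrt_mul_self hs1.le]
      field_simp
    rw [expand, hD, add_div, sub_div, mul_div_assoc]
    rw [mul_one_div]
  -- split the integral
  have split : (∫ t in a..b, divDiff Q x t * Real.sqrt ((t - a) / (b - t)))
      = (∫ t in a..b, Q.derivative.eval t / w t) - Q.derivative.eval x * Real.pi
        + (x - a) * ∫ t in a..b, divS Q x t / w t := by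
    rw [intervalIntegral.integral_congr key,
      intervalIntegral.integral_add (i1.sub i2) i3,
      intervalIntegral.integral_sub i1 i2,
      intervalIntegral.integral_const_mul, intervalIntegral.integral_const_mul,
      I0 hab (intA hab (fun _ => (1:ℝ)) continuous_const)]
  have hK : 0 ≤ ∫ t in a..b, divS Q x t / w t := by
    apply intervalIntegral.integral_nonneg hab.le
    intro t _
    exact div_nonneg (divDiff_eq_divS Q x t ▸ divDiff_nonneg Q hconv x t) (Real.sqrt_nonneg _)
  have hJ : (∫ t in a..b, Q.derivative.eval t / w t) = phi Q a b := (phi_eq Q hab).symm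
  rw [pFun, split, hJ]
  have final : 1 / (2 * Real.pi) * (phi Q a b - Q.derivative.eval x * Real.pi
        + (x - a) * ∫ t in a..b, divS Q x t / w t) + 1 / 2 * Q.derivative.eval x
      = 1 / (2 * Real.pi) * (phi Q a b + (x - a) * ∫ t in a..b, divS Q x t / w t) := by
    field_simp
    ring
  rw [final]
  have : 0 ≤ phi Q a b + (x - a) * ∫ t in a..b, divS Q x t / w t :=
    add_nonneg hphi (mul_nonneg (by linarith) hK)
  positivity
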